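/- Let b > 0 and let a, a' ∈ ℝ. Then for every measurable set S ⊆ ℝ, ∫_S (1/(2b))·exp(−|x − a|/b) dx ≤ exp(|a − a'|/b) · ∫_S (1/(2b))·exp(−|x − a'|/b) dx. In other words, the Laplace mechanism that outputs a + η, with η a zero-mean Laplace random variable of scale b, is (Δ/b)-differentially private for any pair of outputs whose true values differ by at most Δ = |a − a'|. -/

import Mathlib

open MeasureTheory Real Set

lemma integrable_exp_neg_abs_div (b : ℝ) (hb : 0 < b) :
    Integrable (fun x : ℝ => Real.exp (-|x| / b)) := by
  have hb' : 0 < 1 / b := by positivity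
  have hIoi : IntegrableOn (fun x : ℝ => Real.exp (-|x| / b)) (Ioi 0) := by
    apply (exp_neg_integrableOn_Ioi 0 hb').congr_fun ?_ measurableSet_Ioi
    intro x hx
    simp only []
    rw [abs_of_pos hx]
    ring_nf
  have hIic : IntegrableOn (fun x : ℝ => Real.exp (-|x| / b)) (Iic 0) := by
    rw [← Measure.map_neg_eq_self (volume : Measure ℝ)]
    let m : MeasurableEmbedding fun x : ℝ => -x := (Homeomorph.neg ℝ).measurableEmbedding
    rw [m.integrableOn_map_iff]
    simp_rw [Function.comp_def, abs_neg, neg_preimage, neg_Iic, neg_zero]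
    exact Iff.mpr integrableOn_Ici_iff_integrableOn_Ioi hIoi
  have : Integrable (fun x : ℝ => Real.exp (-|x| / b))
      (volume.restrict (Iic 0 ∪ Ioi 0)) := hIic.union hIoi
  rwa [Iic_union_Ioi, Measure.restrict_univ] at this

lemma integrable_laplace (b : ℝ) (hb : 0 < b) (a : ℝ) :
    Integrable (fun x : ℝ => (1 / (2 * b)) * Real.exp (-|x - a| / b)) :=
  ((integrable_exp_neg_abs_div b hb).comp_sub_right a).const_mul _

/-- the Laplace mechanism is differentially private: for any
`b > 0`, `a, a' : ℝ` and measurable `S ⊆ ℝ`,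
`∫_S (1/(2b)) e^{−|x−a|/b} dx ≤ e^{|a−a'|/b} ∫_S (1/(2b)) e^{−|x−a'|/b} dx`. -/
theorem laplace_mechanism_dp
    (b : ℝ) (hb : 0 < b) (a a' : ℝ) (S : Set ℝ) (hS : MeasurableSet S) :
    (∫ x in S, (1 / (2 * b)) * Real.exp (-|x - a| / b))
      ≤ Real.exp (|a - a'| / b) * ∫ x in S, (1 / (2 * b)) * Real.exp (-|x - a'| / b) := by
  rw [← MeasureTheory.integral_const_mul]
  apply setIntegral_mono_on ((integrable_laplace b hb a).integrableOn)
    (((integrable_laplace b hb a').const_mul _).integrableOn) hS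
  intro x _
  have htri : |x - a| ≥ |x - a'| - |a - a'| := by
    have := abs_sub_abs_le_abs_sub (x - a') (x - a)
    have h2 : (x - a') - (x - a) = a - a' := by ring
    rw [h2] at this
    linarith
  have hexp : Real.exp (-|x - a| / b) ≤ Real.exp (|a - a'| / b) * Real.exp (-|x - a'| / b) := by
    rw [← Real.exp_add]
    apply Real.exp_le_exp.mpr
    rw [← add_div]
    gcongr
    linarith
  have h2b : 0 ≤ 1 / (2 * b) := by positivity
  calc (1 / (2 * b)) * Real.exp (-|x - a| / b)
      ≤ (1 / (2 * b)) * (Real.exp (|a - a'| / b) * Real.exp (-|x - a'| / b)) :=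
        mul_le_mul_of_nonneg_left hexp h2b
    _ = Real.exp (|a - a'| / b) * ((1 / (2 * b)) * Real.exp (-|x - a'| / b)) := by ring
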